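/- Let E be a rearrangement-invariant quasi-Banach function space on (0,∞) with functional ρ_E and Boyd indices p_E, q_E. Let 0 < Θ < ∞ and 0 < r < p_E, and assume either (q_E < ∞ and 1/Θ + 1/q_E > 1/r) or (q_E = ∞ and 1/Θ ≥ 1/r). Then for every compatible couple (X_0, X_1) of quasi-normed spaces, (X_0, X_1)_{Θ,r;E} is an intermediate space: there are constants c, C > 0 such that ‖x‖_{X_0+X_1} ≤ c ‖x‖_{(X_0,X_1)_{Θ,r;E}} for all x ∈ (X_0,X_1)_{Θ,r;E}, and ‖x‖_{(X_0,X_1)_{Θ,r;E}} ≤ C ‖x‖_{X_0∩X_1} for all x ∈ X_0 ∩ X_1; that is, X_0 ∩ X_1 ⊂ (X_0, X_1)_{Θ,r;E} ⊂ X_0 + X_1 with continuous embeddings. -/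

import Mathlib

open MeasureTheory Set Filter
open scoped ENNReal NNReal

noncomputable section

/-- The non-increasing rearrangement of a function on `(0, ∞)` (with Lebesgue measure):
`f^*(t) = inf {λ : |{s > 0 : |f(s)| > λ}| ≤ t}`. -/
def rearr (f : ℝ → ℝ) (t : ℝ) : ℝ≥0∞ :=
  sInf {lam : ℝ≥0∞ |
    volume {s : ℝ | 0 < s ∧ lam < ENNReal.ofReal |f s|} ≤ ENNReal.ofReal t}

/-- A rearrangement-invariant quasi-Banach function space on `(0,∞)`, given by the
functional `ρ` on (extended-)nonnegative measurable functions on `(0,∞)`. -/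
structure RIQBFS where
  ρ : (ℝ → ℝ≥0∞) → ℝ≥0∞
  C : ℝ
  one_le_C : 1 ≤ C
  eq_zero_iff : ∀ f : ℝ → ℝ≥0∞, ρ f = 0 ↔ f =ᵐ[volume.restrict (Set.Ioi (0 : ℝ))] 0
  smul_eq : ∀ (c : ℝ≥0) (f : ℝ → ℝ≥0∞), ρ (fun t => (c : ℝ≥0∞) * f t) = (c : ℝ≥0∞) * ρ f
  quasi_triangle : ∀ f g : ℝ → ℝ≥0∞, ρ (fun t => f t + g t) ≤ ENNReal.ofReal C * (ρ f + ρ g)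
  mono : ∀ f g : ℝ → ℝ≥0∞,
    (∀ᵐ t ∂(volume.restrict (Set.Ioi (0 : ℝ))), g t ≤ f t) → ρ g ≤ ρ f
  fatou : ∀ (fn : ℕ → ℝ → ℝ≥0∞) (f : ℝ → ℝ≥0∞),
    (∀ n, ∀ᵐ t ∂(volume.restrict (Set.Ioi (0 : ℝ))), fn n t ≤ fn (n + 1) t) →
    (∀ᵐ t ∂(volume.restrict (Set.Ioi (0 : ℝ))),
      Filter.Tendsto (fun n => fn n t) Filter.atTop (nhds (f t))) →
    Filter.Tendsto (fun n => ρ (fn n)) Filter.atTop (nhds (ρ f))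
  indicator_finite : ∀ ω : Set ℝ, MeasurableSet ω → ω ⊆ Set.Ioi (0 : ℝ) → volume ω < ⊤ →
    ρ (Set.indicator ω fun _ => 1) < ⊤

/-- The quasi-norm of the space `E`: `‖f‖_E = ρ_E (f^*)`. -/
def RIQBFS.normE (E : RIQBFS) (f : ℝ → ℝ) : ℝ≥0∞ := E.ρ (rearr f)

/-- The operator norm of the dilation operator `(D_a f)(t) = f (a t)` on `E`. -/
def dilNorm (E : RIQBFS) (a : ℝ) : ℝ≥0∞ :=
  ⨆ (f : ℝ → ℝ) (_ : Measurable f) (_ : E.normE f ≤ 1), E.normE fun t => f (a * t)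

/-- The lower Boyd index
`p_E = sup {p > 0 : ∃ c > 0, ∀ 0 < a < 1, ‖D_a‖ ≤ c a^{-1/p}}` (an element of `(0, ∞]`). -/
def lowerBoyd (E : RIQBFS) : ℝ≥0∞ :=
  sSup (ENNReal.ofReal ''
    {p : ℝ | 0 < p ∧ ∃ c : ℝ, 0 < c ∧ ∀ a : ℝ, 0 < a → a < 1 →
      dilNorm E a ≤ ENNReal.ofReal (c * a ^ (-(1 / p)))})

/-- The upper Boyd index
`q_E = inf {q > 0 : ∃ c > 0, ∀ a ≥ 1, ‖D_a‖ ≤ c a^{-1/q}}` (an element of `(0, ∞]`,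
with `inf ∅ = ∞`). -/
def upperBoyd (E : RIQBFS) : ℝ≥0∞ :=
  sInf (ENNReal.ofReal ''
    {q : ℝ | 0 < q ∧ ∃ c : ℝ, 0 < c ∧ ∀ a : ℝ, 1 ≤ a →
      dilNorm E a ≤ ENNReal.ofReal (c * a ^ (-(1 / q)))})

/-- A quasi-normed space continuously embedded into the ambient space `Z`, modelled by an
extended-real-valued quasi-norm `N` on `Z` (the space itself is `{x : N x < ∞}`),
with quasi-triangle constant `C`. -/
structure QuasiNormFun (Z : Type*) [AddCommGroup Z] [Module ℝ Z] where
  N : Z → ℝ≥0∞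
  C : ℝ
  one_le_C : 1 ≤ C
  eq_zero_iff : ∀ x : Z, N x = 0 ↔ x = 0
  smul_eq : ∀ (c : ℝ) (x : Z), N (c • x) = ENNReal.ofReal |c| * N x
  quasi_triangle : ∀ x y : Z, N (x + y) ≤ ENNReal.ofReal C * (N x + N y)

/-- The Peetre K-functional
`K(t, x; X₀, X₁) = inf {‖x₀‖_{X₀} + t ‖x₁‖_{X₁} : x = x₀ + x₁}`. -/
def Kfun {Z : Type*} [AddCommGroup Z] (N0 N1 : Z → ℝ≥0∞) (t : ℝ) (x : Z) : ℝ≥0∞ :=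
  ⨅ (p : Z × Z) (_ : p.1 + p.2 = x), N0 p.1 + ENNReal.ofReal t * N1 p.2

/-- The quasi-norm of the interpolation space `(X₀, X₁)_{Θ,r;E}` of Kwok-Pun Ho:
`‖x‖ = ρ_E (t ↦ t^{-1/r} K(t^{1/Θ}, x; X₀, X₁))`. -/
def interpNorm (E : RIQBFS) (Θ r : ℝ) {Z : Type*} [AddCommGroup Z]
    (N0 N1 : Z → ℝ≥0∞) (x : Z) : ℝ≥0∞ :=
  E.ρ fun t => ENNReal.ofReal (t ^ (-(1 / r))) * Kfun N0 N1 (t ^ (1 / Θ)) x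



lemma ae_Ioi {P : ℝ → Prop} (h : ∀ t, 0 < t → P t) :
    ∀ᵐ t ∂(volume.restrict (Set.Ioi (0:ℝ))), P t :=
  (ae_restrict_iff' measurableSet_Ioi).2 (ae_of_all _ fun t ht => h t ht)

lemma rho_mono_pt (E : RIQBFS) {f g : ℝ → ℝ≥0∞} (h : ∀ t, 0 < t → g t ≤ f t) :
    E.ρ g ≤ E.ρ f := E.mono f g (ae_Ioi h)

lemma rho_congr (E : RIQBFS) {f g : ℝ → ℝ≥0∞}
    (h : f =ᵐ[volume.restrict (Set.Ioi (0:ℝ))] g) : E.ρ f = E.ρ g :=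
  le_antisymm (E.mono g f (h.mono fun _ ht => ht.le)) (E.mono f g (h.mono fun _ ht => ht.ge))

lemma rho_zero (E : RIQBFS) : E.ρ (fun _ => 0) = 0 :=
  (E.eq_zero_iff _).2 (ae_of_all _ fun _ => rfl)

lemma rearr_ind {b c : ℝ} (hb : 0 < b) (hc : 0 < c) :
    rearr ((Set.Ioc (0:ℝ) b).indicator fun _ => c)
      = fun t => if t < b then ENNReal.ofReal c else 0 := by
  funext t
  have hset : ∀ lam : ℝ≥0∞,
      {s : ℝ | 0 < s ∧ lam < ENNReal.ofReal |((Set.Ioc (0:ℝ) b).indicator fun _ => c) s|}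
        = if lam < ENNReal.ofReal c then Set.Ioc (0:ℝ) b else ∅ := by
    intro lam
    split_ifs with hl
    · ext s
      simp only [Set.mem_setOf_eq, Set.mem_Ioc]
      constructor
      · rintro ⟨hs, hlt⟩
        by_contra hsb
        have : ((Set.Ioc (0:ℝ) b).indicator fun _ => c) s = 0 := by
          apply Set.indicator_of_notMem
          simp only [Set.mem_Ioc]; tauto
        rw [this] at hlt; simp at hlt
      · rintro ⟨hs, hsb⟩
        refine ⟨hs, ?_⟩
        rw [Set.indicator_of_mem (by exact ⟨hs, hsb⟩)]
        rwa [abs_of_pos hc]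
    · ext s
      simp only [Set.mem_setOf_eq, Set.mem_empty_iff_false, iff_false, not_and]
      intro hs
      by_cases hmem : s ∈ Set.Ioc (0:ℝ) b
      · rw [Set.indicator_of_mem hmem, abs_of_pos hc]; exact not_lt.2 (not_lt.1 hl)
      · rw [Set.indicator_of_notMem hmem]; simp
  unfold rearr
  simp only [hset]
  have hvol : ∀ lam : ℝ≥0∞,
      volume (if lam < ENNReal.ofReal c then Set.Ioc (0:ℝ) b else ∅)
        = if lam < ENNReal.ofReal c then ENNReal.ofReal b else 0 := by
    intro lam; split_ifs <;> simp [Real.volume_Ioc]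
  simp only [hvol]
  split_ifs with htb
  · have hnb : ¬ (ENNReal.ofReal b ≤ ENNReal.ofReal t) := by
      rw [not_le]
      exact (ENNReal.ofReal_lt_ofReal_iff hb).2 htb
    have : {lam : ℝ≥0∞ | (if lam < ENNReal.ofReal c then ENNReal.ofReal b else 0)
        ≤ ENNReal.ofReal t} = Set.Ici (ENNReal.ofReal c) := by
      ext lam
      simp only [Set.mem_setOf_eq, Set.mem_Ici]
      split_ifs with h
      · simp [hnb, not_le.2 h]
      · simpa using not_lt.1 h
    rw [this, csInf_Ici]
  · have hble : ENNReal.ofReal b ≤ ENNReal.ofReal t :=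
      ENNReal.ofReal_le_ofReal (not_lt.1 htb)
    have : {lam : ℝ≥0∞ | (if lam < ENNReal.ofReal c then ENNReal.ofReal b else 0)
        ≤ ENNReal.ofReal t} = Set.univ := by
      ext lam; simp only [Set.mem_setOf_eq, Set.mem_univ, iff_true]
      split_ifs; exacts [hble, zero_le]
    rw [this, sInf_univ]; rfl

def nuE (E : RIQBFS) (b : ℝ) : ℝ≥0∞ := E.ρ ((Set.Ioc (0:ℝ) b).indicator fun _ => (1:ℝ≥0∞))

lemma nuE_lt_top (E : RIQBFS) (b : ℝ) : nuE E b < ⊤ :=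
  E.indicator_finite _ measurableSet_Ioc Set.Ioc_subset_Ioi_self
    (by rw [Real.volume_Ioc]; exact ENNReal.ofReal_lt_top)

lemma rho_ind_pos (E : RIQBFS) {ω : Set ℝ} (hm : MeasurableSet ω) (hsub : ω ⊆ Set.Ioi 0)
    (hvol : volume ω ≠ 0) : E.ρ (ω.indicator fun _ => (1:ℝ≥0∞)) ≠ 0 := by
  intro h0
  have h := (E.eq_zero_iff _).1 h0
  have hne : {t : ℝ | ¬ ω.indicator (fun _ => (1:ℝ≥0∞)) t = 0} = ω := by
    ext t; by_cases ht : t ∈ ω <;> simp [Set.indicator_of_mem, Set.indicator_of_notMem, ht]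
  have h2 : (volume.restrict (Set.Ioi (0:ℝ))) ω = 0 := by
    have h' := ae_iff.1 h
    simpa [hne] using h'
  rw [Measure.restrict_apply hm, Set.inter_eq_self_of_subset_left hsub] at h2
  exact hvol h2

lemma nuE_pos (E : RIQBFS) {b : ℝ} (hb : 0 < b) : nuE E b ≠ 0 :=
  rho_ind_pos E measurableSet_Ioc Set.Ioc_subset_Ioi_self
    (by rw [Real.volume_Ioc]; simpa using hb)

lemma ae_ne_restrict (b : ℝ) : ∀ᵐ t ∂(volume.restrict (Set.Ioi (0:ℝ))), t ≠ b := by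
  rw [ae_iff]
  have : {t : ℝ | ¬ t ≠ b} = {b} := by ext t; simp
  rw [this]
  exact le_antisymm ((Measure.restrict_le_self _).trans_eq (measure_singleton b)) (zero_le)

lemma normE_ind (E : RIQBFS) {b c : ℝ} (hb : 0 < b) (hc : 0 < c) :
    E.normE ((Set.Ioc (0:ℝ) b).indicator fun _ => c) = ENNReal.ofReal c * nuE E b := by
  unfold RIQBFS.normE
  rw [rearr_ind hb hc]
  have heq : E.ρ (fun t => if t < b then ENNReal.ofReal c else 0)
      = E.ρ (fun t => (c.toNNReal : ℝ≥0∞) * (Set.Ioc (0:ℝ) b).indicator (fun _ => (1:ℝ≥0∞)) t) := by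
    apply rho_congr
    filter_upwards [ae_ne_restrict b, ae_restrict_mem measurableSet_Ioi] with t htb hti
    rcases lt_or_gt_of_ne htb with hlt | hgt
    · rw [if_pos hlt, Set.indicator_of_mem (Set.mem_Ioc.mpr ⟨hti, hlt.le⟩), mul_one, ENNReal.ofReal]
    · rw [if_neg (not_lt.2 hgt.le), Set.indicator_of_notMem, mul_zero]
      simp only [Set.mem_Ioc, not_and, not_le]
      exact fun _ => hgt
  rw [heq, E.smul_eq c.toNNReal]
  rfl

lemma dil_bound (E : RIQBFS) {a : ℝ} (ha : 0 < a) :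
    nuE E (1/a) ≤ nuE E 1 * dilNorm E a := by
  set ν1 := nuE E 1 with hν1
  have hν1top : ν1 ≠ ⊤ := (nuE_lt_top E 1).ne
  have hν1pos : ν1 ≠ 0 := nuE_pos E one_pos
  set c : ℝ := (ν1.toReal)⁻¹ with hcdef
  have hc : 0 < c := by
    apply inv_pos.2
    exact ENNReal.toReal_pos hν1pos hν1top
  have hcinv : ENNReal.ofReal c = ν1⁻¹ := by
    rw [hcdef, ENNReal.ofReal_inv_of_pos (ENNReal.toReal_pos hν1pos hν1top),
      ENNReal.ofReal_toReal hν1top]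
  have hcoν : ENNReal.ofReal c * ν1 = 1 := by
    rw [hcinv]; exact ENNReal.inv_mul_cancel hν1pos hν1top
  set f : ℝ → ℝ := (Set.Ioc (0:ℝ) 1).indicator fun _ => c with hfdef
  have hfm : Measurable f := (measurable_const.indicator measurableSet_Ioc)
  have hfnorm : E.normE f ≤ 1 := by
    rw [hfdef, normE_ind E one_pos hc, hcoν]
  have hdil : E.normE (fun t => f (a * t)) ≤ dilNorm E a := by
    unfold dilNorm
    exact le_iSup_of_le f (le_iSup_of_le hfm (le_iSup_of_le hfnorm le_rfl))
  have hcomp : (fun t => f (a * t)) = (Set.Ioc (0:ℝ) (1/a)).indicator fun _ => c := by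
    funext t
    by_cases ht : t ∈ Set.Ioc (0:ℝ) (1/a)
    · rw [Set.indicator_of_mem ht, hfdef, Set.indicator_of_mem]
      obtain ⟨h1, h2⟩ := ht
      refine Set.mem_Ioc.mpr ⟨mul_pos ha h1, ?_⟩
      have := (le_div_iff₀ ha).1 h2
      nlinarith
    · rw [Set.indicator_of_notMem ht, hfdef, Set.indicator_of_notMem]
      simp only [Set.mem_Ioc, not_and_or, not_lt, not_le] at ht ⊢
      rcases ht with h | h
      · left; exact mul_nonpos_of_nonneg_of_nonpos ha.le h
      · right
        have := (div_lt_iff₀ ha).1 h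
        nlinarith
  rw [hcomp, normE_ind E (by positivity) hc] at hdil
  calc nuE E (1/a) = (ν1 * ENNReal.ofReal c) * nuE E (1/a) := by
        rw [mul_comm ν1, hcoν, one_mul]
    _ = ν1 * (ENNReal.ofReal c * nuE E (1/a)) := by ring
    _ ≤ ν1 * dilNorm E a := mul_le_mul_right hdil ν1

lemma rho_quasi_sum (E : RIQBFS) : ∀ (n : ℕ) (g : ℕ → ℝ → ℝ≥0∞),
    E.ρ (fun t => ∑ k ∈ Finset.range n, g k t)
      ≤ ∑ k ∈ Finset.range n, (ENNReal.ofReal E.C) ^ (k+1) * E.ρ (g k) := by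
  intro n
  induction n with
  | zero => intro g; simp [rho_zero E]
  | succ n ih =>
    intro g
    have hsplit : (fun t => ∑ k ∈ Finset.range (n+1), g k t)
        = fun t => g 0 t + ∑ k ∈ Finset.range n, g (k+1) t := by
      funext t
      rw [Finset.sum_range_succ' (fun k => g k t) n]
      ring
    rw [hsplit]
    calc E.ρ (fun t => g 0 t + ∑ k ∈ Finset.range n, g (k+1) t)
        ≤ ENNReal.ofReal E.C * (E.ρ (g 0) + E.ρ (fun t => ∑ k ∈ Finset.range n, g (k+1) t)) :=
          E.quasi_triangle _ _
      _ ≤ ENNReal.ofReal E.C * (E.ρ (g 0)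
            + ∑ k ∈ Finset.range n, (ENNReal.ofReal E.C) ^ (k+1) * E.ρ (g (k+1))) := by
          gcongr
          exact ih (fun k => g (k+1))
      _ = (ENNReal.ofReal E.C) ^ 1 * E.ρ (g 0)
            + ∑ k ∈ Finset.range n, (ENNReal.ofReal E.C) ^ (k+2) * E.ρ (g (k+1)) := by
          rw [mul_add, Finset.mul_sum, pow_one]
          congr 1
          refine Finset.sum_congr rfl fun k _ => ?_
          rw [← mul_assoc, ← pow_succ']
      _ = ∑ k ∈ Finset.range (n+1), (ENNReal.ofReal E.C) ^ (k+1) * E.ρ (g k) := by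
          rw [Finset.sum_range_succ' (fun k => (ENNReal.ofReal E.C) ^ (k+1) * E.ρ (g k)) n]
          ring

lemma geom_half_sum (n : ℕ) : ∑ k ∈ Finset.range n, ((2:ℝ≥0∞)⁻¹) ^ k ≤ 2 := by
  have h1 := ENNReal.sum_le_tsum (f := fun k => ((2:ℝ≥0∞)⁻¹) ^ k) (Finset.range n)
  refine h1.trans ?_
  rw [ENNReal.tsum_geometric]
  rw [show (1:ℝ≥0∞) - 2⁻¹ = 2⁻¹ from ENNReal.one_sub_inv_two]
  rw [inv_inv]

/-- Main series lemma: if `F n` increases to `h` pointwise, each `F n` is dominated by a sum of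
pieces `g k` whose `ρ`-norms decay like `D * s^k` with `ofReal C * s ≤ 2⁻¹`, then `ρ h` is finite. -/
lemma rho_lt_top_of_pieces (E : RIQBFS) (h : ℝ → ℝ≥0∞) (F : ℕ → ℝ → ℝ≥0∞)
    (g : ℕ → ℝ → ℝ≥0∞) (D s : ℝ≥0∞) (hD : D ≠ ⊤)
    (hs : ENNReal.ofReal E.C * s ≤ 2⁻¹)
    (hg : ∀ k, E.ρ (g k) ≤ D * s ^ k)
    (hmono : ∀ n t, F n t ≤ F (n+1) t)
    (hlim : ∀ t, 0 < t → Filter.Tendsto (fun n => F n t) Filter.atTop (nhds (h t)))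
    (hF : ∀ n t, F n t ≤ ∑ k ∈ Finset.range n, g k t) :
    E.ρ h < ⊤ := by
  have hC1 : (1:ℝ≥0∞) ≤ ENNReal.ofReal E.C := by
    rw [← ENNReal.ofReal_one]
    exact ENNReal.ofReal_le_ofReal E.one_le_C
  have hCtop : ENNReal.ofReal E.C ≠ ⊤ := ENNReal.ofReal_ne_top
  have key : ∀ n, E.ρ (F n) ≤ 2 * (ENNReal.ofReal E.C * D) := by
    intro n
    calc E.ρ (F n) ≤ E.ρ (fun t => ∑ k ∈ Finset.range n, g k t) :=
          rho_mono_pt E (fun t _ => hF n t)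
      _ ≤ ∑ k ∈ Finset.range n, (ENNReal.ofReal E.C) ^ (k+1) * E.ρ (g k) := rho_quasi_sum E n g
      _ ≤ ∑ k ∈ Finset.range n, (ENNReal.ofReal E.C * D) * ((2:ℝ≥0∞)⁻¹) ^ k := by
          refine Finset.sum_le_sum fun k _ => ?_
          calc (ENNReal.ofReal E.C) ^ (k+1) * E.ρ (g k)
              ≤ (ENNReal.ofReal E.C) ^ (k+1) * (D * s ^ k) := mul_le_mul_right (hg k) _
            _ = (ENNReal.ofReal E.C * D) * (ENNReal.ofReal E.C * s) ^ k := by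
                rw [pow_succ', mul_pow]; ring
            _ ≤ (ENNReal.ofReal E.C * D) * ((2:ℝ≥0∞)⁻¹) ^ k := by
                gcongr
      _ = (ENNReal.ofReal E.C * D) * ∑ k ∈ Finset.range n, ((2:ℝ≥0∞)⁻¹) ^ k := by
          rw [Finset.mul_sum]
      _ ≤ (ENNReal.ofReal E.C * D) * 2 := mul_le_mul_right (geom_half_sum n) _
      _ = 2 * (ENNReal.ofReal E.C * D) := mul_comm _ _
  have htend := E.fatou F h (fun n => ae_of_all _ fun t => hmono n t)
    (ae_Ioi fun t ht => hlim t ht)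
  have hle : E.ρ h ≤ 2 * (ENNReal.ofReal E.C * D) := le_of_tendsto' htend key
  exact hle.trans_lt (by
    apply ENNReal.mul_lt_top (by norm_num)
    exact ENNReal.mul_lt_top hCtop.lt_top hD.lt_top)

lemma lowerBoyd_extract (E : RIQBFS) {r : ℝ} (hr : 0 < r)
    (hrE : ENNReal.ofReal r < lowerBoyd E) :
    ∃ p : ℝ, r < p ∧ 0 < p ∧ ∃ c : ℝ, 0 < c ∧ ∀ a : ℝ, 0 < a → a < 1 →
      dilNorm E a ≤ ENNReal.ofReal (c * a ^ (-(1 / p))) := by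
  rw [lowerBoyd, lt_sSup_iff] at hrE
  obtain ⟨b, hb, hrb⟩ := hrE
  obtain ⟨p, hp, rfl⟩ := hb
  refine ⟨p, ?_, hp.1, hp.2⟩
  exact (ENNReal.ofReal_lt_ofReal_iff (hr.trans (by exact_mod_cast
    (ENNReal.ofReal_lt_ofReal_iff_of_nonneg hr.le).1 hrb))).1 hrb |>.trans_le le_rfl

lemma upperBoyd_extract (E : RIQBFS) {r Θ : ℝ} (hr : 0 < r) (hΘ : 0 < Θ)
    (h1 : upperBoyd E ≠ ⊤)
    (h2 : ENNReal.ofReal (1 / r) < ENNReal.ofReal (1 / Θ) + (upperBoyd E)⁻¹) :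
    ∃ q : ℝ, 0 < q ∧ 1 / r < 1 / Θ + 1 / q ∧ ∃ c : ℝ, 0 < c ∧ ∀ a : ℝ, 1 ≤ a →
      dilNorm E a ≤ ENNReal.ofReal (c * a ^ (-(1 / q))) := by
  by_cases hcase : 1 / r ≤ 1 / Θ
  · -- any q in the (nonempty) set works
    have hne : (ENNReal.ofReal ''
        {q : ℝ | 0 < q ∧ ∃ c : ℝ, 0 < c ∧ ∀ a : ℝ, 1 ≤ a →
          dilNorm E a ≤ ENNReal.ofReal (c * a ^ (-(1 / q)))}).Nonempty := by
      by_contra hemp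
      rw [Set.not_nonempty_iff_eq_empty] at hemp
      rw [upperBoyd, hemp, sInf_empty] at h1
      exact h1 rfl
    obtain ⟨b, hb⟩ := hne
    obtain ⟨q, hq, rfl⟩ := hb
    refine ⟨q, hq.1, ?_, hq.2⟩
    have : 0 < 1 / q := one_div_pos.2 hq.1
    linarith
  · push_neg at hcase
    set d : ℝ := 1 / r - 1 / Θ with hd
    have hdpos : 0 < d := sub_pos.2 hcase
    have hlt : upperBoyd E < ENNReal.ofReal (1 / d) := by
      by_contra hge
      push_neg at hge
      have hinv : (upperBoyd E)⁻¹ ≤ ENNReal.ofReal d := by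
        have h' : (upperBoyd E)⁻¹ ≤ (ENNReal.ofReal (1 / d))⁻¹ := ENNReal.inv_le_inv' hge
        rwa [← ENNReal.ofReal_inv_of_pos (by positivity), one_div, inv_inv] at h'
      have : ENNReal.ofReal (1 / Θ) + (upperBoyd E)⁻¹
          ≤ ENNReal.ofReal (1 / Θ) + ENNReal.ofReal d := add_le_add_right hinv _
      rw [← ENNReal.ofReal_add (by positivity) hdpos.le] at this
      have h1r : (1:ℝ) / Θ + d = 1 / r := by rw [hd]; ring
      rw [h1r] at this
      exact absurd (h2.trans_le this) (lt_irrefl _)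
    rw [upperBoyd, sInf_lt_iff] at hlt
    obtain ⟨b, hb, hblt⟩ := hlt
    obtain ⟨q, hq, rfl⟩ := hb
    have hqd : q < 1 / d := by
      have h1d : (0:ℝ) < 1 / d := by positivity
      exact (ENNReal.ofReal_lt_ofReal_iff h1d).1 hblt
    refine ⟨q, hq.1, ?_, hq.2⟩
    have : d < 1 / q := by
      rw [lt_div_iff₀ hq.1]
      rw [lt_div_iff₀ hdpos] at hqd
      linarith [mul_comm q d]
    linarith [this]

lemma rho_const_mul (E : RIQBFS) (c : ℝ) (f : ℝ → ℝ≥0∞) :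
    E.ρ (fun t => ENNReal.ofReal c * f t) = ENNReal.ofReal c * E.ρ f := by
  have h : ENNReal.ofReal c = (c.toNNReal : ℝ≥0∞) := rfl
  rw [h, E.smul_eq]

lemma choose_B (C δ : ℝ) (hC : 1 ≤ C) (hδ : 0 < δ) :
    ∃ B : ℝ, 2 ≤ B ∧ ENNReal.ofReal C * ENNReal.ofReal (B ^ (-δ)) ≤ 2⁻¹ := by
  refine ⟨max 2 ((2*C) ^ (1/δ)), le_max_left _ _, ?_⟩
  set B := max 2 ((2*C) ^ (1/δ)) with hB
  have hBpos : (0:ℝ) < B := lt_of_lt_of_le two_pos (le_max_left _ _)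
  have h2C : (0:ℝ) < 2 * C := by linarith
  have hB2C : 2 * C ≤ B ^ δ := by
    calc 2 * C = ((2*C) ^ (1/δ)) ^ δ := by
          rw [← Real.rpow_mul h2C.le, one_div_mul_cancel hδ.ne', Real.rpow_one]
      _ ≤ B ^ δ := Real.rpow_le_rpow (Real.rpow_nonneg h2C.le _) (le_max_right _ _) hδ.le
  have hkey : C * B ^ (-δ) ≤ 1/2 := by
    rw [Real.rpow_neg hBpos.le]
    have hBδpos : (0:ℝ) < B ^ δ := Real.rpow_pos_of_pos hBpos _
    rw [mul_inv_le_iff₀ hBδpos]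
    calc C = (1/2) * (2 * C) := by ring
      _ ≤ (1/2) * B ^ δ := by nlinarith
  calc ENNReal.ofReal C * ENNReal.ofReal (B ^ (-δ))
      = ENNReal.ofReal (C * B ^ (-δ)) := (ENNReal.ofReal_mul (by linarith)).symm
    _ ≤ ENNReal.ofReal (1/2) := ENNReal.ofReal_le_ofReal hkey
    _ = 2⁻¹ := by
        rw [one_div, ENNReal.ofReal_inv_of_pos two_pos, ENNReal.ofReal_ofNat]

lemma tail_fin (E : RIQBFS) {r p cp : ℝ} (hr : 0 < r) (hrp : r < p) (hcp : 0 < cp)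
    (Hp : ∀ a : ℝ, 0 < a → a < 1 → dilNorm E a ≤ ENNReal.ofReal (cp * a ^ (-(1 / p)))) :
    E.ρ ((Set.Ioi (1:ℝ)).indicator fun t => ENNReal.ofReal (t ^ (-(1/r)))) < ⊤ := by
  classical
  have hp : 0 < p := hr.trans hrp
  set δ : ℝ := 1/r - 1/p with hδdef
  have hδ : 0 < δ := by
    have := one_div_lt_one_div_of_lt hr hrp
    simp only [hδdef]; linarith
  obtain ⟨B, hB2, hBs⟩ := choose_B E.C δ E.one_le_C hδ
  have hB1 : (1:ℝ) < B := by linarith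
  have hBpos : (0:ℝ) < B := by linarith
  set ν1 := nuE E 1 with hν1
  set g : ℕ → ℝ → ℝ≥0∞ := fun k t =>
    ENNReal.ofReal (B ^ (-((k:ℝ)/r))) *
      (Set.Ioc (0:ℝ) (B ^ ((k:ℝ)+1))).indicator (fun _ => (1:ℝ≥0∞)) t with hgdef
  set F : ℕ → ℝ → ℝ≥0∞ := fun n t =>
    (Set.Ioc (1:ℝ) (B ^ (n:ℝ))).indicator (fun s => ENNReal.ofReal (s ^ (-(1/r)))) t with hFdef
  set D : ℝ≥0∞ := ν1 * ENNReal.ofReal (cp * B ^ (1/p)) with hDdef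
  have hD : D ≠ ⊤ := by
    rw [hDdef]
    exact (ENNReal.mul_lt_top (nuE_lt_top E 1) ENNReal.ofReal_lt_top).ne
  have hg : ∀ k, E.ρ (g k) ≤ D * (ENNReal.ofReal (B ^ (-δ))) ^ k := by
    intro k
    have hsmul : E.ρ (g k) = ENNReal.ofReal (B ^ (-((k:ℝ)/r))) * nuE E (B ^ ((k:ℝ)+1)) :=
      rho_const_mul E _ _
    have hBk1 : (1:ℝ) < B ^ ((k:ℝ)+1) :=
      (Real.one_lt_rpow_iff_of_pos hBpos).2 (Or.inl ⟨hB1, by positivity⟩)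
    set a : ℝ := (B ^ ((k:ℝ)+1))⁻¹ with hadef
    have hapos : 0 < a := by rw [hadef]; positivity
    have ha1 : a < 1 := by rw [hadef]; exact inv_lt_one_of_one_lt₀ hBk1
    have hinva : 1/a = B ^ ((k:ℝ)+1) := by rw [hadef, one_div, inv_inv]
    have hdil := dil_bound E hapos
    rw [hinva] at hdil
    have haB : a = B ^ (-((k:ℝ)+1)) := by rw [hadef, Real.rpow_neg hBpos.le]
    have haexp : a ^ (-(1/p)) = B ^ (((k:ℝ)+1)/p) := by
      rw [haB, ← Real.rpow_mul hBpos.le]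
      congr 1; ring
    have hHp := Hp a hapos ha1
    rw [haexp] at hHp
    have hreal : B ^ (-((k:ℝ)/r)) * (cp * B ^ (((k:ℝ)+1)/p))
        = cp * B ^ (1/p) * (B ^ (-δ)) ^ k := by
      calc B ^ (-((k:ℝ)/r)) * (cp * B ^ (((k:ℝ)+1)/p))
          = cp * B ^ (-((k:ℝ)/r) + ((k:ℝ)+1)/p) := by rw [Real.rpow_add hBpos]; ring
        _ = cp * B ^ (1/p + (-δ) * (k:ℝ)) := by
            congr 1
            rw [hδdef]
            field_simp
            ring
        _ = cp * B ^ (1/p) * (B ^ (-δ)) ^ k := by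
            rw [Real.rpow_add hBpos, Real.rpow_mul hBpos.le, Real.rpow_natCast]; ring
    calc E.ρ (g k) = ENNReal.ofReal (B ^ (-((k:ℝ)/r))) * nuE E (B ^ ((k:ℝ)+1)) := hsmul
      _ ≤ ENNReal.ofReal (B ^ (-((k:ℝ)/r))) * (ν1 * dilNorm E a) := by gcongr
      _ ≤ ENNReal.ofReal (B ^ (-((k:ℝ)/r))) * (ν1 * ENNReal.ofReal (cp * B ^ (((k:ℝ)+1)/p))) := by
          gcongr
      _ = ν1 * ENNReal.ofReal (B ^ (-((k:ℝ)/r)) * (cp * B ^ (((k:ℝ)+1)/p))) := by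
          have hsplit2 : ENNReal.ofReal (B ^ (-((k:ℝ)/r)) * (cp * B ^ (((k:ℝ)+1)/p)))
              = ENNReal.ofReal (B ^ (-((k:ℝ)/r))) * ENNReal.ofReal (cp * B ^ (((k:ℝ)+1)/p)) :=
            ENNReal.ofReal_mul (by positivity)
          rw [hsplit2]
          exact mul_left_comm (ENNReal.ofReal (B ^ (-((k:ℝ)/r)))) ν1
            (ENNReal.ofReal (cp * B ^ (((k:ℝ)+1)/p)))
      _ = D * (ENNReal.ofReal (B ^ (-δ))) ^ k := by
          have hofreal : ENNReal.ofReal (cp * B ^ (1/p) * (B ^ (-δ)) ^ k)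
              = ENNReal.ofReal (cp * B ^ (1/p)) * (ENNReal.ofReal (B ^ (-δ))) ^ k := by
            rw [ENNReal.ofReal_mul (by positivity), ENNReal.ofReal_pow (by positivity)]
          rw [hreal, hofreal, hDdef, mul_assoc]
  have hmono : ∀ n t, F n t ≤ F (n+1) t := by
    intro n t
    simp only [hFdef]
    by_cases ht : t ∈ Set.Ioc (1:ℝ) (B ^ (n:ℝ))
    · rw [Set.indicator_of_mem ht, Set.indicator_of_mem]
      refine Set.mem_Ioc.mpr ⟨ht.1, ht.2.trans ?_⟩
      exact Real.rpow_le_rpow_of_exponent_le hB1.le (by exact_mod_cast Nat.le_succ n)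
    · rw [Set.indicator_of_notMem ht]; exact zero_le
  have hlim : ∀ t, 0 < t → Filter.Tendsto (fun n => F n t) Filter.atTop
      (nhds ((Set.Ioi (1:ℝ)).indicator (fun s => ENNReal.ofReal (s ^ (-(1/r)))) t)) := by
    intro t ht
    by_cases ht1 : 1 < t
    · obtain ⟨N, hN⟩ := pow_unbounded_of_one_lt t hB1
      apply tendsto_atTop_of_eventually_const (i₀ := N)
      intro n hn
      simp only [hFdef]
      rw [Set.indicator_of_mem (Set.mem_Ioi.2 ht1), Set.indicator_of_mem]
      refine Set.mem_Ioc.mpr ⟨ht1, ?_⟩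
      calc t ≤ B ^ N := hN.le
        _ = B ^ (N:ℝ) := (Real.rpow_natCast B N).symm
        _ ≤ B ^ (n:ℝ) := Real.rpow_le_rpow_of_exponent_le hB1.le (by exact_mod_cast hn)
    · apply tendsto_atTop_of_eventually_const (i₀ := 0)
      intro n _
      simp only [hFdef]
      rw [Set.indicator_of_notMem (fun hmem => ht1 hmem.1),
        Set.indicator_of_notMem (show t ∉ Set.Ioi 1 from ht1)]
  have hF : ∀ n t, F n t ≤ ∑ k ∈ Finset.range n, g k t := by
    intro n t
    simp only [hFdef]
    by_cases ht : t ∈ Set.Ioc (1:ℝ) (B ^ (n:ℝ))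
    · obtain ⟨ht1, htn⟩ := ht
      -- find the dyadic block containing t
      set P : ℕ → Prop := fun k => B ^ (k:ℝ) < t with hPdef
      have hP0 : P 0 := by rw [hPdef]; simpa using ht1
      set k := Nat.findGreatest P n with hkdef
      have hPk : P k := Nat.findGreatest_spec (Nat.zero_le n) hP0
      have hkn : k < n := by
        have hle : k ≤ n := Nat.findGreatest_le (P := P) n
        rcases lt_or_eq_of_le hle with h | h
        · exact h
        · exfalso
          have hPk' : B ^ ((k:ℕ):ℝ) < t := hPk
          rw [h] at hPk'
          exact absurd htn (not_le.2 hPk')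
      have hkk1 : ¬ P (k+1) :=
        Nat.findGreatest_is_greatest (Nat.lt_succ_self k) (Nat.succ_le_of_lt hkn)
      have htk1 : t ≤ B ^ ((k:ℝ)+1) := by
        have h' : t ≤ B ^ (((k+1:ℕ)):ℝ) := not_lt.1 hkk1
        calc t ≤ B ^ (((k+1:ℕ)):ℝ) := h'
          _ = B ^ ((k:ℝ)+1) := by norm_cast
      have hBkt : B ^ ((k:ℝ)) < t := hPk
      have hsingle : ENNReal.ofReal (t ^ (-(1/r))) ≤ g k t := by
        simp only [hgdef]
        have hmem : t ∈ Set.Ioc (0:ℝ) (B ^ ((k:ℝ)+1)) :=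
          Set.mem_Ioc.mpr ⟨lt_trans zero_lt_one ht1, htk1⟩
        rw [Set.indicator_of_mem hmem, mul_one]
        apply ENNReal.ofReal_le_ofReal
        calc t ^ (-(1/r)) ≤ (B ^ ((k:ℝ))) ^ (-(1/r)) :=
              Real.rpow_le_rpow_of_nonpos (Real.rpow_pos_of_pos hBpos _) hBkt.le
                (by rw [neg_nonpos]; positivity)
          _ = B ^ (-((k:ℝ)/r)) := by
              rw [← Real.rpow_mul hBpos.le]; congr 1; ring
      calc (Set.Ioc (1:ℝ) (B ^ (n:ℝ))).indicator (fun s => ENNReal.ofReal (s ^ (-(1/r)))) t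
          = ENNReal.ofReal (t ^ (-(1/r))) := Set.indicator_of_mem (Set.mem_Ioc.mpr ⟨ht1, htn⟩) _
        _ ≤ g k t := hsingle
        _ ≤ ∑ k ∈ Finset.range n, g k t :=
            Finset.single_le_sum (f := fun k => g k t) (fun _ _ => zero_le)
              (Finset.mem_range.2 hkn)
    · rw [Set.indicator_of_notMem ht]; exact zero_le
  exact rho_lt_top_of_pieces E _ F g D (ENNReal.ofReal (B ^ (-δ))) hD hBs hg hmono hlim hF

lemma zero_fin (E : RIQBFS) {r Θ q cq : ℝ} (hr : 0 < r) (hΘ : 0 < Θ) (hq : 0 < q)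
    (hcq : 0 < cq) (hδq : 1/r < 1/Θ + 1/q)
    (Hq : ∀ a : ℝ, 1 ≤ a → dilNorm E a ≤ ENNReal.ofReal (cq * a ^ (-(1 / q)))) :
    E.ρ ((Set.Ioc (0:ℝ) 1).indicator fun t => ENNReal.ofReal (t ^ (1/Θ - 1/r))) < ⊤ := by
  classical
  set s : ℝ := 1/Θ - 1/r with hsdef
  set δ : ℝ := s + 1/q with hδdef
  have hδ : 0 < δ := by rw [hδdef, hsdef]; linarith
  obtain ⟨B, hB2, hBs⟩ := choose_B E.C δ E.one_le_C hδ
  have hB1 : (1:ℝ) < B := by linarith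
  have hBpos : (0:ℝ) < B := by linarith
  set ν1 := nuE E 1 with hν1
  set g : ℕ → ℝ → ℝ≥0∞ := fun k t =>
    ENNReal.ofReal (B ^ |s| * B ^ ((-(k:ℝ))*s)) *
      (Set.Ioc (0:ℝ) (B ^ (-(k:ℝ)))).indicator (fun _ => (1:ℝ≥0∞)) t with hgdef
  set F : ℕ → ℝ → ℝ≥0∞ := fun n t =>
    (Set.Ioc (B ^ (-(n:ℝ))) 1).indicator (fun u => ENNReal.ofReal (u ^ s)) t with hFdef
  set D : ℝ≥0∞ := ν1 * ENNReal.ofReal (B ^ |s| * cq) with hDdef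
  have hD : D ≠ ⊤ := by
    rw [hDdef]
    exact (ENNReal.mul_lt_top (nuE_lt_top E 1) ENNReal.ofReal_lt_top).ne
  have hg : ∀ k, E.ρ (g k) ≤ D * (ENNReal.ofReal (B ^ (-δ))) ^ k := by
    intro k
    have hsmul : E.ρ (g k)
        = ENNReal.ofReal (B ^ |s| * B ^ ((-(k:ℝ))*s)) * nuE E (B ^ (-(k:ℝ))) :=
      rho_const_mul E _ _
    set a : ℝ := B ^ ((k:ℝ)) with hadef
    have hapos : 0 < a := Real.rpow_pos_of_pos hBpos _
    have ha1 : 1 ≤ a := Real.one_le_rpow hB1.le (by positivity)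
    have hinva : 1/a = B ^ (-(k:ℝ)) := by
      rw [hadef, one_div, ← Real.rpow_neg hBpos.le]
    have hdil := dil_bound E hapos
    rw [hinva] at hdil
    have haexp : a ^ (-(1/q)) = B ^ ((k:ℝ) * (-(1/q))) := by
      rw [hadef, ← Real.rpow_mul hBpos.le]
    have hHq := Hq a ha1
    rw [haexp] at hHq
    have hreal : (B ^ |s| * B ^ ((-(k:ℝ))*s)) * (cq * B ^ ((k:ℝ) * (-(1/q))))
        = B ^ |s| * cq * (B ^ (-δ)) ^ k := by
      calc (B ^ |s| * B ^ ((-(k:ℝ))*s)) * (cq * B ^ ((k:ℝ) * (-(1/q))))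
          = B ^ |s| * cq * B ^ ((-(k:ℝ))*s + (k:ℝ) * (-(1/q))) := by
            rw [Real.rpow_add hBpos]; ring
        _ = B ^ |s| * cq * B ^ ((-δ) * (k:ℝ)) := by
            congr 1
            rw [hδdef]
            ring
        _ = B ^ |s| * cq * (B ^ (-δ)) ^ k := by
            rw [Real.rpow_mul hBpos.le, Real.rpow_natCast]
    calc E.ρ (g k) = ENNReal.ofReal (B ^ |s| * B ^ ((-(k:ℝ))*s)) * nuE E (B ^ (-(k:ℝ))) := hsmul
      _ ≤ ENNReal.ofReal (B ^ |s| * B ^ ((-(k:ℝ))*s)) * (ν1 * dilNorm E a) := by gcongr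
      _ ≤ ENNReal.ofReal (B ^ |s| * B ^ ((-(k:ℝ))*s))
            * (ν1 * ENNReal.ofReal (cq * B ^ ((k:ℝ) * (-(1/q))))) := by gcongr
      _ = ν1 * ENNReal.ofReal ((B ^ |s| * B ^ ((-(k:ℝ))*s)) * (cq * B ^ ((k:ℝ) * (-(1/q))))) := by
          have hsplit2 : ENNReal.ofReal ((B ^ |s| * B ^ ((-(k:ℝ))*s)) * (cq * B ^ ((k:ℝ) * (-(1/q)))))
              = ENNReal.ofReal (B ^ |s| * B ^ ((-(k:ℝ))*s))
                * ENNReal.ofReal (cq * B ^ ((k:ℝ) * (-(1/q)))) :=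
            ENNReal.ofReal_mul (by positivity)
          rw [hsplit2]
          exact mul_left_comm (ENNReal.ofReal (B ^ |s| * B ^ ((-(k:ℝ))*s))) ν1
            (ENNReal.ofReal (cq * B ^ ((k:ℝ) * (-(1/q)))))
      _ = D * (ENNReal.ofReal (B ^ (-δ))) ^ k := by
          have hofreal : ENNReal.ofReal (B ^ |s| * cq * (B ^ (-δ)) ^ k)
              = ENNReal.ofReal (B ^ |s| * cq) * (ENNReal.ofReal (B ^ (-δ))) ^ k := by
            rw [ENNReal.ofReal_mul (by positivity), ENNReal.ofReal_pow (by positivity)]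
          rw [hreal, hofreal, hDdef, mul_assoc]
  have hmono : ∀ n t, F n t ≤ F (n+1) t := by
    intro n t
    simp only [hFdef]
    by_cases ht : t ∈ Set.Ioc (B ^ (-(n:ℝ))) 1
    · rw [Set.indicator_of_mem ht, Set.indicator_of_mem]
      refine Set.mem_Ioc.mpr ⟨lt_of_le_of_lt ?_ ht.1, ht.2⟩
      apply Real.rpow_le_rpow_of_exponent_le hB1.le
      push_cast; linarith
    · rw [Set.indicator_of_notMem ht]; exact zero_le
  have hlim : ∀ t, 0 < t → Filter.Tendsto (fun n => F n t) Filter.atTop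
      (nhds ((Set.Ioc (0:ℝ) 1).indicator (fun u => ENNReal.ofReal (u ^ s)) t)) := by
    intro t ht
    by_cases ht1 : t ≤ 1
    · obtain ⟨N, hN⟩ := pow_unbounded_of_one_lt (1/t) hB1
      apply tendsto_atTop_of_eventually_const (i₀ := N)
      intro n hn
      simp only [hFdef]
      rw [Set.indicator_of_mem (Set.mem_Ioc.mpr ⟨ht, ht1⟩),
        Set.indicator_of_mem]
      refine Set.mem_Ioc.mpr ⟨?_, ht1⟩
      have h1 : B ^ (-(n:ℝ)) ≤ B ^ (-(N:ℝ)) := by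
        apply Real.rpow_le_rpow_of_exponent_le hB1.le
        push_cast
        exact neg_le_neg (by exact_mod_cast hn)
      have h2 : B ^ (-(N:ℝ)) < t := by
        rw [Real.rpow_neg hBpos.le, Real.rpow_natCast]
        rw [inv_lt_comm₀ (by positivity) ht]
        rw [one_div] at hN
        exact hN
      linarith
    · apply tendsto_atTop_of_eventually_const (i₀ := 0)
      intro n _
      simp only [hFdef]
      rw [Set.indicator_of_notMem (fun hmem => ht1 hmem.2),
        Set.indicator_of_notMem (fun hmem => ht1 hmem.2)]
  have hF : ∀ n t, F n t ≤ ∑ k ∈ Finset.range n, g k t := by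
    intro n t
    simp only [hFdef]
    by_cases ht : t ∈ Set.Ioc (B ^ (-(n:ℝ))) 1
    · obtain ⟨htn, ht1⟩ := ht
      have htpos : 0 < t := lt_trans (by positivity) htn
      set P : ℕ → Prop := fun k => t ≤ B ^ (-((k:ℕ):ℝ)) with hPdef
      have hP0 : P 0 := by
        show t ≤ B ^ (-((0:ℕ):ℝ))
        norm_num
        exact ht1
      set k := Nat.findGreatest P n with hkdef
      have hPk : t ≤ B ^ (-((k:ℕ):ℝ)) := Nat.findGreatest_spec (Nat.zero_le n) hP0
      have hkn : k < n := by
        have hle : k ≤ n := Nat.findGreatest_le (P := P) n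
        rcases lt_or_eq_of_le hle with h | h
        · exact h
        · exfalso
          have hPk' : t ≤ B ^ (-((k:ℕ):ℝ)) := hPk
          rw [h] at hPk'
          exact absurd htn (not_lt.2 hPk')
      have hkk1 : ¬ P (k+1) :=
        Nat.findGreatest_is_greatest (Nat.lt_succ_self k) (Nat.succ_le_of_lt hkn)
      have htk1 : B ^ (-(((k+1:ℕ)):ℝ)) < t := not_le.1 hkk1
      have hbound : t ^ s ≤ B ^ |s| * B ^ ((-(k:ℝ))*s) := by
        have hone : (1:ℝ) ≤ B ^ |s| := by
          have := Real.rpow_le_rpow_of_exponent_le hB1.le (abs_nonneg s)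
          rwa [Real.rpow_zero] at this
        rcases le_or_gt 0 s with hs0 | hs0
        · have h1 : t ^ s ≤ (B ^ (-((k:ℕ):ℝ))) ^ s :=
            Real.rpow_le_rpow htpos.le hPk hs0
          have h2 : (B ^ (-((k:ℕ):ℝ))) ^ s = B ^ ((-(k:ℝ))*s) := by
            rw [← Real.rpow_mul hBpos.le]
          nlinarith [Real.rpow_nonneg hBpos.le ((-(k:ℝ))*s), h1, h2]
        · have h1 : t ^ s ≤ (B ^ (-(((k+1:ℕ)):ℝ))) ^ s :=
            Real.rpow_le_rpow_of_nonpos (by positivity) htk1.le hs0.le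
          have h2 : (B ^ (-(((k+1:ℕ)):ℝ))) ^ s = B ^ (-s) * B ^ ((-(k:ℝ))*s) := by
            rw [← Real.rpow_mul hBpos.le, ← Real.rpow_add hBpos]
            congr 1
            push_cast
            ring
          rw [abs_of_neg hs0]
          calc t ^ s ≤ (B ^ (-(((k+1:ℕ)):ℝ))) ^ s := h1
            _ = B ^ (-s) * B ^ ((-(k:ℝ))*s) := h2
      have hsingle : ENNReal.ofReal (t ^ s) ≤ g k t := by
        simp only [hgdef]
        have hmem : t ∈ Set.Ioc (0:ℝ) (B ^ (-(k:ℝ))) := Set.mem_Ioc.mpr ⟨htpos, hPk⟩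
        rw [Set.indicator_of_mem hmem, mul_one]
        exact ENNReal.ofReal_le_ofReal hbound
      calc (Set.Ioc (B ^ (-(n:ℝ))) 1).indicator (fun u => ENNReal.ofReal (u ^ s)) t
          = ENNReal.ofReal (t ^ s) := Set.indicator_of_mem (Set.mem_Ioc.mpr ⟨htn, ht1⟩) _
        _ ≤ g k t := hsingle
        _ ≤ ∑ k ∈ Finset.range n, g k t :=
            Finset.single_le_sum (f := fun k => g k t) (fun _ _ => zero_le)
              (Finset.mem_range.2 hkn)
    · rw [Set.indicator_of_notMem ht]; exact zero_le
  exact rho_lt_top_of_pieces E _ F g D (ENNReal.ofReal (B ^ (-δ))) hD hBs hg hmono hlim hF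

lemma hfun_fin (E : RIQBFS) {Θ r : ℝ} (hΘ : 0 < Θ) (hr : 0 < r)
    (hrE : ENNReal.ofReal r < lowerBoyd E)
    (hq : (upperBoyd E ≠ ⊤ ∧
        ENNReal.ofReal (1 / r) < ENNReal.ofReal (1 / Θ) + (upperBoyd E)⁻¹) ∨
      (upperBoyd E = ⊤ ∧ 1 / r ≤ 1 / Θ)) :
    E.ρ (fun t => ENNReal.ofReal (t ^ (-(1/r))) * min 1 (ENNReal.ofReal (t ^ (1/Θ)))) < ⊤ := by
  set h0 : ℝ → ℝ≥0∞ :=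
    (Set.Ioc (0:ℝ) 1).indicator (fun t => ENNReal.ofReal (t ^ (1/Θ - 1/r))) with hh0
  set h1 : ℝ → ℝ≥0∞ :=
    (Set.Ioi (1:ℝ)).indicator (fun t => ENNReal.ofReal (t ^ (-(1/r)))) with hh1
  have hsplit : E.ρ (fun t => ENNReal.ofReal (t ^ (-(1/r))) * min 1 (ENNReal.ofReal (t ^ (1/Θ))))
      ≤ ENNReal.ofReal E.C * (E.ρ h0 + E.ρ h1) := by
    refine le_trans (rho_mono_pt E fun t ht => ?_) (E.quasi_triangle h0 h1)
    by_cases ht1 : t ≤ 1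
    · have hmin : min 1 (ENNReal.ofReal (t ^ (1/Θ))) = ENNReal.ofReal (t ^ (1/Θ)) :=
        min_eq_right (ENNReal.ofReal_le_one.2 (Real.rpow_le_one ht.le ht1 (by positivity)))
      have hprod : ENNReal.ofReal (t ^ (-(1/r))) * ENNReal.ofReal (t ^ (1/Θ))
          = ENNReal.ofReal (t ^ (1/Θ - 1/r)) := by
        rw [← ENNReal.ofReal_mul (by positivity), ← Real.rpow_add ht]
        congr 1
        ring
      rw [hmin, hprod]
      have : h0 t = ENNReal.ofReal (t ^ (1/Θ - 1/r)) := by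
        rw [hh0, Set.indicator_of_mem (Set.mem_Ioc.mpr ⟨ht, ht1⟩)]
      rw [this]
      exact le_add_of_nonneg_right (zero_le)
    · push_neg at ht1
      have hmin : min 1 (ENNReal.ofReal (t ^ (1/Θ))) = 1 :=
        min_eq_left (by
          rw [← ENNReal.ofReal_one]
          exact ENNReal.ofReal_le_ofReal (Real.one_le_rpow ht1.le (by positivity)))
      rw [hmin, mul_one]
      have : h1 t = ENNReal.ofReal (t ^ (-(1/r))) := by
        rw [hh1, Set.indicator_of_mem (Set.mem_Ioi.mpr ht1)]
      rw [this]
      exact le_add_of_nonneg_left (zero_le)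
  obtain ⟨p, hrp, hp, cp, hcp, Hp⟩ := lowerBoyd_extract E hr hrE
  have hfin1 : E.ρ h1 < ⊤ := tail_fin E hr hrp hcp Hp
  have hfin0 : E.ρ h0 < ⊤ := by
    rcases hq with ⟨h1', h2'⟩ | ⟨_, hcase⟩
    · obtain ⟨q, hq0, hδq, cq, hcq, Hq⟩ := upperBoyd_extract E hr hΘ h1' h2'
      exact zero_fin E hr hΘ hq0 hcq hδq Hq
    · have : E.ρ h0 ≤ nuE E 1 := by
        apply rho_mono_pt E
        intro t ht
        rw [hh0]
        by_cases htm : t ∈ Set.Ioc (0:ℝ) 1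
        · rw [Set.indicator_of_mem htm, Set.indicator_of_mem htm]
          exact ENNReal.ofReal_le_one.2 (Real.rpow_le_one ht.le htm.2 (by linarith)) |>.trans
            le_rfl
        · rw [Set.indicator_of_notMem htm]; exact zero_le
      exact this.trans_lt (nuE_lt_top E 1)
  exact hsplit.trans_lt (ENNReal.mul_lt_top ENNReal.ofReal_lt_top
    (ENNReal.add_lt_top.2 ⟨hfin0, hfin1⟩))

section Kfacts
variable {Z : Type*} [AddCommGroup Z] [Module ℝ Z]

lemma Kfun_le_left (X0 X1 : QuasiNormFun Z) (t : ℝ) (x : Z) :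
    Kfun X0.N X1.N t x ≤ X0.N x := by
  have h : Kfun X0.N X1.N t x ≤ X0.N x + ENNReal.ofReal t * X1.N 0 :=
    iInf₂_le (x, (0:Z)) (add_zero x)
  rwa [(X1.eq_zero_iff 0).2 rfl, mul_zero, add_zero] at h

lemma Kfun_le_right (X0 X1 : QuasiNormFun Z) (t : ℝ) (x : Z) :
    Kfun X0.N X1.N t x ≤ ENNReal.ofReal t * X1.N x := by
  have h : Kfun X0.N X1.N t x ≤ X0.N 0 + ENNReal.ofReal t * X1.N x :=
    iInf₂_le ((0:Z), x) (zero_add x)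
  rwa [(X0.eq_zero_iff 0).2 rfl, zero_add] at h

lemma Kfun_mono (X0 X1 : QuasiNormFun Z) {t t' : ℝ} (h : t ≤ t') (x : Z) :
    Kfun X0.N X1.N t x ≤ Kfun X0.N X1.N t' x := by
  refine iInf_mono fun p => iInf_mono fun _ => ?_
  exact add_le_add_right (mul_le_mul_left (ENNReal.ofReal_le_ofReal h) _) _

end Kfacts


/-- Under the Boyd-index conditions of Theorem 14, for every compatible couple
`(X₀, X₁)` of quasi-normed spaces, `(X₀, X₁)_{Θ,r;E}` is an intermediate space:
`X₀ ∩ X₁ ⊂ (X₀, X₁)_{Θ,r;E} ⊂ X₀ + X₁` with continuous embeddings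
(here `‖x‖_{X₀+X₁} = K(1, x)` and `‖x‖_{X₀∩X₁} = max{‖x‖_{X₀}, ‖x‖_{X₁}}`). -/
theorem stmt8 {Z : Type*} [AddCommGroup Z] [Module ℝ Z]
    (E : RIQBFS) (Θ r : ℝ) (hΘ : 0 < Θ) (hr : 0 < r)
    (hrE : ENNReal.ofReal r < lowerBoyd E)
    (hq : (upperBoyd E ≠ ⊤ ∧
        ENNReal.ofReal (1 / r) < ENNReal.ofReal (1 / Θ) + (upperBoyd E)⁻¹) ∨
      (upperBoyd E = ⊤ ∧ 1 / r ≤ 1 / Θ))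
    (X0 X1 : QuasiNormFun Z) :
    (∃ c : ℝ, 0 < c ∧ ∀ x : Z, interpNorm E Θ r X0.N X1.N x < ⊤ →
      Kfun X0.N X1.N 1 x ≤ ENNReal.ofReal c * interpNorm E Θ r X0.N X1.N x) ∧
    (∃ C : ℝ, 0 < C ∧ ∀ x : Z, X0.N x < ⊤ → X1.N x < ⊤ →
      interpNorm E Θ r X0.N X1.N x ≤ ENNReal.ofReal C * max (X0.N x) (X1.N x)) := by
  constructor
  · -- lower embedding into X0 + X1
    set ν2 : ℝ≥0∞ := E.ρ ((Set.Ioc (1:ℝ) 2).indicator fun _ => (1:ℝ≥0∞)) with hν2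
    have hν2pos : ν2 ≠ 0 :=
      rho_ind_pos E measurableSet_Ioc (fun u hu => lt_trans zero_lt_one hu.1)
        (by rw [Real.volume_Ioc]; norm_num)
    have hν2top : ν2 ≠ ⊤ :=
      (E.indicator_finite _ measurableSet_Ioc (fun u hu => lt_trans zero_lt_one hu.1)
        (by rw [Real.volume_Ioc]; exact ENNReal.ofReal_lt_top)).ne
    set e : ℝ≥0∞ := ENNReal.ofReal (2 ^ (-(1/r))) * ν2 with hedef
    have hepos : e ≠ 0 := by
      rw [hedef]
      apply mul_ne_zero _ hν2pos
      simp only [ne_eq, ENNReal.ofReal_eq_zero, not_le]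
      positivity
    set cE : ℝ≥0∞ := ENNReal.ofReal (2 ^ (1/r)) * ν2⁻¹ with hcEdef
    have hcEtop : cE ≠ ⊤ := by
      rw [hcEdef]
      exact (ENNReal.mul_lt_top ENNReal.ofReal_lt_top
        (ENNReal.inv_lt_top.2 (pos_iff_ne_zero.2 hν2pos))).ne
    refine ⟨cE.toReal + 1, by positivity, fun x hx => ?_⟩
    -- key pointwise bound
    have hkey : ∀ m : ℝ≥0, (m : ℝ≥0∞) ≤ Kfun X0.N X1.N 1 x →
        ENNReal.ofReal (2 ^ (-(1/r))) * m * ν2 ≤ interpNorm E Θ r X0.N X1.N x := by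
      intro m hm
      set m2 : ℝ≥0 := ((2:ℝ) ^ (-(1/r))).toNNReal * m with hm2
      have hm2coe : (m2 : ℝ≥0∞) = ENNReal.ofReal (2 ^ (-(1/r))) * m := by
        rw [hm2, ENNReal.coe_mul]; rfl
      have hpt : ∀ t, 0 < t →
          (m2 : ℝ≥0∞) *
              (Set.Ioc (1:ℝ) 2).indicator (fun _ => (1:ℝ≥0∞)) t
            ≤ ENNReal.ofReal (t ^ (-(1 / r))) * Kfun X0.N X1.N (t ^ (1 / Θ)) x := by
        intro t ht
        by_cases htm : t ∈ Set.Ioc (1:ℝ) 2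
        · rw [Set.indicator_of_mem htm, mul_one]
          obtain ⟨ht1, ht2⟩ := htm
          have hKmono : (m : ℝ≥0∞) ≤ Kfun X0.N X1.N (t ^ (1 / Θ)) x := by
            refine hm.trans (Kfun_mono X0 X1 ?_ x)
            exact Real.one_le_rpow ht1.le (by positivity)
          have hcoef : ENNReal.ofReal (2 ^ (-(1/r))) ≤ ENNReal.ofReal (t ^ (-(1/r))) := by
            apply ENNReal.ofReal_le_ofReal
            exact Real.rpow_le_rpow_of_nonpos (lt_trans zero_lt_one ht1) ht2
              (by rw [neg_nonpos]; positivity)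
          rw [hm2coe]
          exact mul_le_mul' hcoef hKmono
        · rw [Set.indicator_of_notMem htm, mul_zero]; exact zero_le
      have hmono := rho_mono_pt E hpt
      rw [E.smul_eq m2] at hmono
      calc ENNReal.ofReal (2 ^ (-(1/r))) * m * ν2
          = (m2 : ℝ≥0∞) * ν2 := by rw [hm2coe]
        _ ≤ interpNorm E Θ r X0.N X1.N x := hmono
    -- K(1,x) is finite
    have hKfin : Kfun X0.N X1.N 1 x ≠ ⊤ := by
      intro hKtop
      have hall : ∀ n : ℕ, (n : ℝ≥0∞) * e ≤ interpNorm E Θ r X0.N X1.N x := by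
        intro n
        have := hkey n (by rw [hKtop]; exact le_top)
        rw [hedef]
        calc (n : ℝ≥0∞) * (ENNReal.ofReal (2 ^ (-(1/r))) * ν2)
            = ENNReal.ofReal (2 ^ (-(1/r))) * n * ν2 := by ring
          _ ≤ interpNorm E Θ r X0.N X1.N x := by exact_mod_cast this
      have hbdd : ∀ n : ℕ, (n : ℝ≥0∞) ≤ interpNorm E Θ r X0.N X1.N x / e := by
        intro n
        rw [ENNReal.le_div_iff_mul_le (Or.inl hepos) (Or.inr hx.ne)]
        exact hall n
      obtain ⟨n, hn⟩ := ENNReal.exists_nat_gt ((ENNReal.div_lt_top hx.ne hepos).ne)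
      exact absurd (hbdd n) (not_le.2 hn)
    set κ := Kfun X0.N X1.N 1 x with hκ
    have hκle := hkey κ.toNNReal (by rw [ENNReal.coe_toNNReal hKfin])
    rw [ENNReal.coe_toNNReal hKfin] at hκle
    have hfinal : κ ≤ cE * interpNorm E Θ r X0.N X1.N x := by
      have h2 : ENNReal.ofReal (2 ^ (1/r)) * ENNReal.ofReal (2 ^ (-(1/r))) = 1 := by
        rw [← ENNReal.ofReal_mul (by positivity), ← Real.rpow_add two_pos]
        norm_num
      calc κ = (ENNReal.ofReal (2 ^ (1/r)) * ENNReal.ofReal (2 ^ (-(1/r)))) * κ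
            * (ν2⁻¹ * ν2) := by
            rw [h2, ENNReal.inv_mul_cancel hν2pos hν2top, one_mul, mul_one]
        _ = cE * (ENNReal.ofReal (2 ^ (-(1/r))) * κ * ν2) := by
            rw [hcEdef]; ring
        _ ≤ cE * interpNorm E Θ r X0.N X1.N x := mul_le_mul_right hκle _
    refine hfinal.trans (mul_le_mul_left ?_ _)
    calc cE = ENNReal.ofReal cE.toReal := (ENNReal.ofReal_toReal hcEtop).symm
      _ ≤ ENNReal.ofReal (cE.toReal + 1) := ENNReal.ofReal_le_ofReal (by linarith)
  · -- upper embedding from X0 ∩ X1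
    have hfin := hfun_fin E hΘ hr hrE hq
    set Chf : ℝ≥0∞ := E.ρ (fun t => ENNReal.ofReal (t ^ (-(1/r)))
      * min 1 (ENNReal.ofReal (t ^ (1/Θ)))) with hChf
    refine ⟨Chf.toReal + 1, by positivity, fun x hx0 hx1 => ?_⟩
    set M : ℝ≥0∞ := max (X0.N x) (X1.N x) with hM
    have hMtop : M ≠ ⊤ := by
      rw [hM]
      exact (max_lt hx0 hx1).ne
    have hpt : ∀ t, 0 < t →
        ENNReal.ofReal (t ^ (-(1 / r))) * Kfun X0.N X1.N (t ^ (1 / Θ)) x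
          ≤ (M.toNNReal : ℝ≥0∞) *
            (ENNReal.ofReal (t ^ (-(1/r))) * min 1 (ENNReal.ofReal (t ^ (1/Θ)))) := by
      intro t ht
      have hK : Kfun X0.N X1.N (t ^ (1 / Θ)) x ≤ min 1 (ENNReal.ofReal (t ^ (1/Θ))) * M := by
        rcases le_total (1:ℝ≥0∞) (ENNReal.ofReal (t ^ (1/Θ))) with hc | hc
        · rw [min_eq_left hc, one_mul]
          exact (Kfun_le_left X0 X1 _ x).trans (le_max_left _ _)
        · rw [min_eq_right hc]
          exact (Kfun_le_right X0 X1 _ x).trans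
            (mul_le_mul_right (le_max_right _ _) _)
      rw [ENNReal.coe_toNNReal hMtop]
      calc ENNReal.ofReal (t ^ (-(1 / r))) * Kfun X0.N X1.N (t ^ (1 / Θ)) x
          ≤ ENNReal.ofReal (t ^ (-(1 / r))) * (min 1 (ENNReal.ofReal (t ^ (1/Θ))) * M) :=
            mul_le_mul_right hK _
        _ = M * (ENNReal.ofReal (t ^ (-(1/r))) * min 1 (ENNReal.ofReal (t ^ (1/Θ)))) := by
            ring
    calc interpNorm E Θ r X0.N X1.N x
        ≤ E.ρ (fun t => (M.toNNReal : ℝ≥0∞) *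
            (ENNReal.ofReal (t ^ (-(1/r))) * min 1 (ENNReal.ofReal (t ^ (1/Θ))))) :=
          rho_mono_pt E hpt
      _ = (M.toNNReal : ℝ≥0∞) * Chf := by rw [E.smul_eq, hChf]
      _ = Chf * M := by rw [ENNReal.coe_toNNReal hMtop, mul_comm]
      _ ≤ ENNReal.ofReal (Chf.toReal + 1) * M := by
          refine mul_le_mul_left ?_ _
          calc Chf = ENNReal.ofReal Chf.toReal := (ENNReal.ofReal_toReal hfin.ne).symm
            _ ≤ ENNReal.ofReal (Chf.toReal + 1) := ENNReal.ofReal_le_ofReal (by linarith)
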